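/- In the ℓ₂-ℓ₁ setup, the estimator with sampling probabilities p_i = |y_i − (y₀)_i|/‖y − y₀‖₁ and q_j = (x_j − (x₀)_j)²/‖x − x₀‖₂² is (w₀, L)-centered with L = (∑_{j∈[n]} ‖A_{:j}‖_∞²)^{1/2}. That is, the estimator g̃(w) = (Aᵀy₀ + A_{i:}·‖y−y₀‖₁·sign(y_i − (y₀)_i), −Ax₀ − A_{:j}·‖x−x₀‖₂²/(x_j − (x₀)_j)) satisfies E[g̃(w)] = (Aᵀy, −Ax) and E‖g̃(w) − (Aᵀy₀, −Ax₀)‖*² ≤ L²(‖x − x₀‖₂² + ‖y − y₀‖₁²). -/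

import Mathlib

noncomputable def l1norm {d : ℕ} (v : Fin d → ℝ) : ℝ := ∑ i, |v i|

noncomputable def linfnorm {d : ℕ} (v : Fin d → ℝ) : ℝ := ⨆ i, |v i|

noncomputable def l2sq {d : ℕ} (v : Fin d → ℝ) : ℝ := ∑ i, v i ^ 2

lemma linf_nonneg {d : ℕ} (v : Fin d → ℝ) : 0 ≤ linfnorm v :=
  Real.iSup_nonneg fun _ => abs_nonneg _

lemma le_linf {d : ℕ} (v : Fin d → ℝ) (i : Fin d) : |v i| ≤ linfnorm v :=
  le_ciSup (f := fun i => |v i|) (Set.Finite.bddAbove (Set.finite_range _)) i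

lemma real_abs_mul_sign (r : ℝ) : |r| * Real.sign r = r := by
  rcases lt_trichotomy r 0 with h | h | h
  · rw [Real.sign_of_neg h, abs_of_neg h]; ring
  · simp [h]
  · rw [Real.sign_of_pos h, abs_of_pos h]; ring

lemma linf_le {d : ℕ} {v : Fin d → ℝ} {c : ℝ} (hc : 0 ≤ c) (h : ∀ i, |v i| ≤ c) :
    linfnorm v ≤ c := Real.iSup_le h hc

/-- in the ℓ₂-ℓ₁ setup, the estimator with sampling
probabilities `p_i = |y_i − y₀ᵢ|/‖y−y₀‖₁` and `q_j = (x_j − x₀ⱼ)²/‖x−x₀‖₂²`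
is `(w₀, L)`-centered with `L² = ∑_j ‖A_{:j}‖_∞²`: it is unbiased for
`(Aᵀy, −Ax)` and its expected squared dual-norm deviation from
`(Aᵀy₀, −Ax₀)` is at most `L² (‖x−x₀‖₂² + ‖y−y₀‖₁²)`. -/
theorem l2_l1_basic_estimator_centered {m n : ℕ}
    (A : Matrix (Fin m) (Fin n) ℝ)
    (x x₀ : Fin n → ℝ) (y y₀ : Fin m → ℝ)
    (hxball : l2sq x ≤ 1) (hx₀ball : l2sq x₀ ≤ 1)
    (hy : (∀ i, 0 ≤ y i) ∧ ∑ i, y i = 1)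
    (hy₀ : (∀ i, 0 ≤ y₀ i) ∧ ∑ i, y₀ i = 1)
    (hxne : x ≠ x₀) (hyne : y ≠ y₀)
    (p : Fin m → ℝ) (hp : ∀ i, p i = |y i - y₀ i| / l1norm (y - y₀))
    (q : Fin n → ℝ) (hq : ∀ j, q j = (x j - x₀ j) ^ 2 / l2sq (x - x₀))
    (Gx : Fin m → Fin n → ℝ) (Gy : Fin n → Fin m → ℝ)
    (hGx : ∀ i, Gx i =
      (fun k => ∑ i', A i' k * y₀ i') +
        (l1norm (y - y₀) * Real.sign (y i - y₀ i)) • A i)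
    (hGy : ∀ j, Gy j =
      (fun i => -∑ j', A i j' * x₀ j') -
        (l2sq (x - x₀) / (x j - x₀ j)) • (fun i => A i j)) :
    (∑ i, p i • Gx i = fun k => ∑ i', A i' k * y i') ∧
    (∑ j, q j • Gy j = fun i => -∑ j', A i j' * x j') ∧
    (∑ i, p i * l2sq (Gx i - fun k => ∑ i', A i' k * y₀ i') +
      ∑ j, q j * linfnorm (Gy j - fun i' => -∑ j', A i' j' * x₀ j') ^ 2 ≤
      (∑ j, linfnorm (fun i => A i j) ^ 2) *
        (l2sq (x - x₀) + l1norm (y - y₀) ^ 2)) := by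
  set N := l1norm (y - y₀) with hNdef
  set S := l2sq (x - x₀) with hSdef
  have hNsum : N = ∑ i, |y i - y₀ i| := by simp [hNdef, l1norm]
  have hSsum : S = ∑ j, (x j - x₀ j) ^ 2 := by simp [hSdef, l2sq]
  have hNpos : 0 < N := by
    obtain ⟨i, hi⟩ := Function.ne_iff.mp hyne
    have h1 : 0 < |y i - y₀ i| := abs_pos.mpr (sub_ne_zero.mpr hi)
    have h2 : |y i - y₀ i| ≤ ∑ i', |y i' - y₀ i'| :=
      Finset.single_le_sum (f := fun i' => |y i' - y₀ i'|) (fun i' _ => abs_nonneg _)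
        (Finset.mem_univ i)
    rw [hNsum]; linarith
  have hSpos : 0 < S := by
    obtain ⟨j, hj⟩ := Function.ne_iff.mp hxne
    have hj' : x j - x₀ j ≠ 0 := sub_ne_zero.mpr hj
    have h1 : 0 < (x j - x₀ j) ^ 2 := by positivity
    have h2 : (x j - x₀ j) ^ 2 ≤ ∑ j', (x j' - x₀ j') ^ 2 :=
      Finset.single_le_sum (f := fun j' => (x j' - x₀ j') ^ 2) (fun j' _ => sq_nonneg _)
        (Finset.mem_univ j)
    rw [hSsum]; linarith
  have hNne : N ≠ 0 := ne_of_gt hNpos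
  have hSne : S ≠ 0 := ne_of_gt hSpos
  refine ⟨?_, ?_, ?_⟩
  · -- unbiasedness in x-block
    funext k
    rw [Finset.sum_apply]
    simp only [Pi.smul_apply]
    have key : ∀ i, p i • Gx i k =
        |y i - y₀ i| / N * (∑ i', A i' k * y₀ i') + (y i - y₀ i) * A i k := by
      intro i
      rw [hp, hGx]
      simp only [Pi.add_apply, Pi.smul_apply, smul_eq_mul]
      have hds : |y i - y₀ i| * Real.sign (y i - y₀ i) = y i - y₀ i :=
        real_abs_mul_sign _
      rw [mul_add]
      congr 1
      field_simp
      linear_combination A i k * hds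
    simp only [key]
    rw [Finset.sum_add_distrib]
    have h1 : ∑ i, |y i - y₀ i| / N * (∑ i', A i' k * y₀ i') = ∑ i', A i' k * y₀ i' := by
      rw [← Finset.sum_mul, ← Finset.sum_div, ← hNsum, div_self hNne, one_mul]
    rw [h1, ← Finset.sum_add_distrib]
    exact Finset.sum_congr rfl fun i _ => by ring
  · -- unbiasedness in y-block
    funext i
    rw [Finset.sum_apply]
    simp only [Pi.smul_apply]
    have key : ∀ j, q j • Gy j i =
        q j * (-∑ j', A i j' * x₀ j') - (x j - x₀ j) * A i j := by
      intro j
      rw [hGy]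
      simp only [Pi.sub_apply, Pi.smul_apply, smul_eq_mul]
      rw [hq]
      rcases eq_or_ne (x j - x₀ j) 0 with h0 | h0
      · rw [h0]; simp
      · rw [mul_sub]
        congr 1
        field_simp
    simp only [key]
    rw [Finset.sum_sub_distrib]
    have h1 : ∑ j, q j * (-∑ j', A i j' * x₀ j') = -∑ j', A i j' * x₀ j' := by
      rw [← Finset.sum_mul]
      have : ∑ j, q j = 1 := by
        simp only [hq, ← Finset.sum_div, ← hSsum, div_self hSne]
      rw [this, one_mul]
    rw [h1, ← neg_add', ← Finset.sum_add_distrib]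
    congr 1
    exact Finset.sum_congr rfl fun j _ => by ring
  · -- variance bound
    set T := ∑ j, linfnorm (fun i => A i j) ^ 2 with hTdef
    have hTnn : 0 ≤ T := Finset.sum_nonneg fun j _ => sq_nonneg _
    have h1 : ∀ i, p i * l2sq (Gx i - fun k => ∑ i', A i' k * y₀ i') ≤
        |y i - y₀ i| * N * T := by
      intro i
      have hG : Gx i - (fun k => ∑ i', A i' k * y₀ i') =
          (N * Real.sign (y i - y₀ i)) • A i := by
        rw [hGx]; exact add_sub_cancel_left _ _
      rw [hG, hp]
      rcases eq_or_ne (y i - y₀ i) 0 with h0 | h0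
      · simp [h0, l2sq, Real.sign_zero]
      · have hsign : Real.sign (y i - y₀ i) ^ 2 = 1 := by
          rcases Real.sign_apply_eq_of_ne_zero _ h0 with h | h <;> rw [h] <;> norm_num
        have hl2 : l2sq ((N * Real.sign (y i - y₀ i)) • A i) =
            N ^ 2 * ∑ k, A i k ^ 2 := by
          simp only [l2sq, Pi.smul_apply, smul_eq_mul, mul_pow, hsign, mul_one]
          rw [← Finset.mul_sum]
        rw [hl2]
        have hAle : ∑ k, A i k ^ 2 ≤ T := by
          apply Finset.sum_le_sum
          intro k _
          rw [← sq_abs (A i k)]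
          exact pow_le_pow_left₀ (abs_nonneg _) (le_linf (fun i' => A i' k) i) 2
        calc |y i - y₀ i| / N * (N ^ 2 * ∑ k, A i k ^ 2)
            ≤ |y i - y₀ i| / N * (N ^ 2 * T) := by
              apply mul_le_mul_of_nonneg_left _ (by positivity)
              exact mul_le_mul_of_nonneg_left hAle (by positivity)
          _ = |y i - y₀ i| * N * T := by field_simp
    have h2 : ∀ j, q j * linfnorm (Gy j - fun i' => -∑ j', A i' j' * x₀ j') ^ 2 ≤
        S * linfnorm (fun i => A i j) ^ 2 := by
      intro j
      have hG : Gy j - (fun i' => -∑ j', A i' j' * x₀ j') =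
          -((S / (x j - x₀ j)) • (fun i => A i j)) := by
        rw [hGy]; exact sub_sub_cancel_left _ _
      rw [hG, hq]
      rcases eq_or_ne (x j - x₀ j) 0 with h0 | h0
      · rw [h0]
        norm_num
        positivity
      · set L := linfnorm (fun i => A i j) with hLdef
        have hLnn : 0 ≤ L := linf_nonneg _
        have hlinf : linfnorm (-((S / (x j - x₀ j)) • (fun i => A i j))) ≤
            S / |x j - x₀ j| * L := by
          apply linf_le (by positivity)
          intro i
          simp only [Pi.neg_apply, Pi.smul_apply, smul_eq_mul, abs_neg, abs_mul, abs_div,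
            abs_of_pos hSpos]
          exact mul_le_mul_of_nonneg_left
            (by simpa [hLdef] using le_linf (fun i' => A i' j) i) (by positivity)
        have hsq : linfnorm (-((S / (x j - x₀ j)) • (fun i => A i j))) ^ 2 ≤
            (S / |x j - x₀ j| * L) ^ 2 :=
          pow_le_pow_left₀ (linf_nonneg _) hlinf 2
        calc (x j - x₀ j) ^ 2 / S * linfnorm (-((S / (x j - x₀ j)) • (fun i => A i j))) ^ 2
            ≤ (x j - x₀ j) ^ 2 / S * (S / |x j - x₀ j| * L) ^ 2 :=
              mul_le_mul_of_nonneg_left hsq (by positivity)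
          _ = S * L ^ 2 := by
              rw [mul_pow, div_pow, sq_abs]
              field_simp
    calc (∑ i, p i * l2sq (Gx i - fun k => ∑ i', A i' k * y₀ i')) +
          ∑ j, q j * linfnorm (Gy j - fun i' => -∑ j', A i' j' * x₀ j') ^ 2
        ≤ (∑ i, |y i - y₀ i| * N * T) + ∑ j, S * linfnorm (fun i => A i j) ^ 2 := by
          exact add_le_add (Finset.sum_le_sum fun i _ => h1 i)
            (Finset.sum_le_sum fun j _ => h2 j)
      _ = T * (S + N ^ 2) := by
          rw [← Finset.sum_mul, ← Finset.sum_mul, ← hNsum, ← Finset.mul_sum, ← hTdef]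
          ring
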